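/- Let T : 𝕋 → 𝕋 × 𝕋, and suppose {θ^{(i)}}_{i=1}^{m} ⊂ ℂ/ℤ, ω ∈ 𝕋^d Diophantine, L ∈ ℕ, and δ̄ > 0 are such that: (a) for each i and each x in the ℓ¹-ball Q_{L} with ‖θ^{(i)} + x·ω − θ^{(i′)}‖_𝕋 ≤ δ̄ for some i′, any i″ failing this bound satisfies ‖θ^{(i)} + x·ω − θ^{(i″)}‖_𝕋 > G where G > 2δ̄; and (b) for x ∈ Q_{L^α}∖Ω^{(i)}, min_{i′}‖θ^{(i)} + x·ω − θ^{(i′)}‖_𝕋 > G. Then the relation θ^{(i)} ∼ θ^{(i′)} :⇔ ∃x ∈ Q_L with ‖θ^{(i)} + x·ω − θ^{(i′)}‖_𝕋 ≤ δ̄ is an equivalence relation (reflexivity, symmetry, and transitivity hold). -/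

import Mathlib

/-- The distance on `ℂ/ℤ`: `‖a‖_𝕋 = inf_{l ∈ ℤ} |a − l|`. -/
noncomputable def torusNorm (a : ℂ) : ℝ := ⨅ l : ℤ, ‖a - (l : ℂ)‖

lemma torusNorm_bddBelow (a : ℂ) :
    BddBelow (Set.range fun l : ℤ => ‖a - (l : ℂ)‖) :=
  ⟨0, by rintro r ⟨l, rfl⟩; exact norm_nonneg _⟩

lemma torusNorm_le (a : ℂ) (l : ℤ) : torusNorm a ≤ ‖a - (l : ℂ)‖ :=
  ciInf_le (torusNorm_bddBelow a) l

lemma torusNorm_nonneg (a : ℂ) : 0 ≤ torusNorm a :=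
  le_ciInf fun l => norm_nonneg _

lemma torusNorm_zero : torusNorm 0 = 0 :=
  le_antisymm (by simpa using torusNorm_le 0 0) (torusNorm_nonneg 0)

lemma torusNorm_neg (a : ℂ) : torusNorm (-a) = torusNorm a := by
  have h : ∀ b : ℂ, torusNorm (-b) ≤ torusNorm b := by
    intro b
    refine le_ciInf fun l => ?_
    have h := torusNorm_le (-b) (-l)
    have e : (-b - ((-l : ℤ) : ℂ)) = -(b - l) := by push_cast; ring
    rwa [e, norm_neg] at h
  have h1 := h a
  have h2 := h (-a)
  rw [neg_neg] at h2
  exact le_antisymm h1 h2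

lemma torusNorm_add_le (a b : ℂ) : torusNorm (a + b) ≤ torusNorm a + torusNorm b := by
  refine le_ciInf_add_ciInf fun l l' => ?_
  calc torusNorm (a + b) ≤ ‖a + b - ((l + l' : ℤ) : ℂ)‖ := torusNorm_le _ _
    _ ≤ ‖a - l‖ + ‖b - l'‖ := by
        push_cast
        have : a + b - ((l : ℂ) + l') = (a - l) + (b - l') := by ring
        rw [this]; exact norm_add_le _ _

/-- The near-resonance relation `θ^{(i)} ∼ θ^{(i′)} :⇔ ∃ x ∈ Q_L,
`‖θ^{(i)} + x·ω − θ^{(i′)}‖_𝕋 ≤ δ̄` is an equivalence relation, provided: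
(a) for every `x ∈ Q_L` and every `i″` failing the `δ̄`-bound one has separation `> G`
with `G > 2δ̄`; and (b) for `x ∈ Q_{L^α}` outside the resonant set `Ω^{(i)}`, the minimal
shifted distance exceeds `G`. -/
theorem resonance_equivalence (d m : ℕ) (ω : Fin d → ℝ) (θ : Fin m → ℂ)
    (L : ℕ) (α δb G : ℝ) (hδ : 0 < δb) (hG : 2 * δb < G) (hα : 1 < α)
    (h2L : ((2 * L : ℕ) : ℝ) ≤ (L : ℝ) ^ α)
    (ha : ∀ (i : Fin m) (x : Fin d → ℤ), (∑ j, (x j).natAbs) ≤ L →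
      (∃ i', torusNorm (θ i + ((∑ j, (x j : ℝ) * ω j : ℝ) : ℂ) - θ i') ≤ δb) →
      ∀ i'' : Fin m,
        ¬ torusNorm (θ i + ((∑ j, (x j : ℝ) * ω j : ℝ) : ℂ) - θ i'') ≤ δb →
        G < torusNorm (θ i + ((∑ j, (x j : ℝ) * ω j : ℝ) : ℂ) - θ i''))
    (hb : ∀ (i : Fin m) (x : Fin d → ℤ),
      ((∑ j, (x j).natAbs : ℕ) : ℝ) ≤ (L : ℝ) ^ α →
      ¬ ((∑ j, (x j).natAbs) ≤ L ∧
        ∃ i', torusNorm (θ i + ((∑ j, (x j : ℝ) * ω j : ℝ) : ℂ) - θ i') ≤ δb) →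
      ∀ i' : Fin m,
        G < torusNorm (θ i + ((∑ j, (x j : ℝ) * ω j : ℝ) : ℂ) - θ i')) :
    Equivalence (fun i i' : Fin m => ∃ x : Fin d → ℤ,
      (∑ j, (x j).natAbs) ≤ L ∧
      torusNorm (θ i + ((∑ j, (x j : ℝ) * ω j : ℝ) : ℂ) - θ i') ≤ δb) := by
  constructor
  · -- reflexivity
    intro i
    refine ⟨0, by simp, ?_⟩
    simpa [torusNorm_zero] using hδ.le
  · -- symmetry
    rintro i i' ⟨x, hx, hnorm⟩
    refine ⟨fun j => -(x j), by simpa using hx, ?_⟩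
    have : (θ i' + ((∑ j, ((-(x j) : ℤ) : ℝ) * ω j : ℝ) : ℂ) - θ i)
        = -(θ i + ((∑ j, ((x j : ℤ) : ℝ) * ω j : ℝ) : ℂ) - θ i') := by
      push_cast
      ring_nf
      simp [Finset.sum_neg_distrib, neg_mul]
      ring
    rw [this, torusNorm_neg]
    exact hnorm
  · -- transitivity
    rintro i i' i'' ⟨x, hx, hxn⟩ ⟨y, hy, hyn⟩
    set z : Fin d → ℤ := fun j => x j + y j with hz
    have hsum : ∀ i₁ i₂ : Fin m,
        (θ i₁ + ((∑ j, ((z j : ℤ) : ℝ) * ω j : ℝ) : ℂ) - θ i₂)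
        = (θ i₁ + ((∑ j, ((x j : ℤ) : ℝ) * ω j : ℝ) : ℂ) - θ i')
          + (θ i' + ((∑ j, ((y j : ℤ) : ℝ) * ω j : ℝ) : ℂ) - θ i₂) := by
      intro i₁ i₂
      have : (∑ j, ((z j : ℤ) : ℝ) * ω j) = (∑ j, ((x j : ℤ) : ℝ) * ω j)
          + (∑ j, ((y j : ℤ) : ℝ) * ω j) := by
        rw [← Finset.sum_add_distrib]
        refine Finset.sum_congr rfl fun j _ => ?_
        push_cast [hz]; ring
      rw [this]; push_cast; ring
    have h2 : torusNorm (θ i + ((∑ j, ((z j : ℤ) : ℝ) * ω j : ℝ) : ℂ) - θ i'') ≤ 2 * δb := by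
      rw [hsum i i'']
      calc _ ≤ _ := torusNorm_add_le _ _
        _ ≤ δb + δb := add_le_add hxn hyn
        _ = 2 * δb := by ring
    have hzL : ((∑ j, (z j).natAbs : ℕ) : ℝ) ≤ (L : ℝ) ^ α := by
      refine le_trans ?_ h2L
      have : (∑ j, (z j).natAbs) ≤ 2 * L := by
        calc (∑ j, (z j).natAbs) ≤ ∑ j, ((x j).natAbs + (y j).natAbs) := by
              refine Finset.sum_le_sum fun j _ => ?_
              simpa [hz, Int.natAbs_add_le] using Int.natAbs_add_le (x j) (y j)
          _ = (∑ j, (x j).natAbs) + (∑ j, (y j).natAbs) := Finset.sum_add_distrib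
          _ ≤ L + L := add_le_add hx hy
          _ = 2 * L := by ring
      exact_mod_cast this
    -- by hb (contrapositive), z is a δ̄-resonance from θ i
    by_cases hres : (∑ j, (z j).natAbs) ≤ L ∧
        ∃ i₀, torusNorm (θ i + ((∑ j, ((z j : ℤ) : ℝ) * ω j : ℝ) : ℂ) - θ i₀) ≤ δb
    · obtain ⟨hzL', hex⟩ := hres
      refine ⟨z, hzL', ?_⟩
      by_contra hcon
      have := ha i z hzL' hex i'' hcon
      linarith
    · have := hb i z hzL hres i''
      linarith
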